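/- Let L be a positive even integer and let h : ℤ → ℝ satisfy h_l = 0 for l < 0 and for l ≥ L, and ∑_{l∈ℤ} h_l h_{l+2k} = (1/2)·δ_{k,0} for every integer k. Define g : ℤ → ℝ by g_l = (−1)^{l+1} h_{L−1−l}. Then the perfect-reconstruction identity holds for every integer u (not only even u): ∑_{l∈ℤ} ( g_l g_{l+u} + h_l h_{l+u} ) = δ_{u,0}. -/

import Mathlib

/-- If `h` is a wavelet filter supported in `{0,…,L-1}` (L even, positive)
satisfying the even-shift orthonormality relation with norm `1/2`, and `g` is its
associated scaling filter, then the perfect-reconstruction identity holds for every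
integer shift `u`: `∑_l (g_l g_{l+u} + h_l h_{l+u}) = δ_{u,0}`. -/
theorem stmt6 (L : ℕ) (hLpos : 0 < L) (hLeven : Even L)
    (h : ℤ → ℝ)
    (hsupp : ∀ l : ℤ, (l < 0 ∨ (L : ℤ) ≤ l) → h l = 0)
    (horth_h : ∀ k : ℤ,
      ∑ᶠ l : ℤ, h l * h (l + 2 * k) = (1 / 2) * (if k = 0 then 1 else 0))
    (g : ℤ → ℝ) (hgdef : ∀ l : ℤ, g l = (-1 : ℝ) ^ (l + 1) * h ((L : ℤ) - 1 - l))
    (u : ℤ) :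
    ∑ᶠ l : ℤ, (g l * g (l + u) + h l * h (l + u)) = if u = 0 then 1 else 0 := by
  have hne : (-1 : ℝ) ≠ 0 := by norm_num
  -- finiteness of supports
  have hfinh : ∀ v : ℤ, (Function.support fun l : ℤ => h l * h (l + v)).Finite := by
    intro v
    apply Set.Finite.subset (Set.finite_Icc (0 : ℤ) L)
    intro l hl
    simp only [Function.mem_support] at hl
    by_contra hc
    simp only [Set.mem_Icc, not_and_or, not_le] at hc
    rcases hc with h1 | h1
    · exact hl (by rw [hsupp l (Or.inl h1)]; ring)
    · exact hl (by rw [hsupp l (Or.inr h1.le)]; ring)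
  have hfing : (Function.support fun l : ℤ => g l * g (l + u)).Finite := by
    apply Set.Finite.subset (Set.finite_Icc ((-1 : ℤ)) L)
    intro l hl
    simp only [Function.mem_support] at hl
    by_contra hc
    simp only [Set.mem_Icc, not_and_or, not_le] at hc
    have hg0 : ∀ m : ℤ, (m < 0 ∨ (L : ℤ) ≤ m) → g m = 0 := by
      intro m hm
      rw [hgdef m]
      rcases hm with hm | hm
      · rw [hsupp _ (Or.inr (by omega)), mul_zero]
      · rw [hsupp _ (Or.inl (by omega)), mul_zero]
    rcases hc with h1 | h1
    · exact hl (by rw [hg0 l (Or.inl (by omega))]; ring)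
    · exact hl (by rw [hg0 l (Or.inr (by omega))]; ring)
  -- sign computation
  have key : ∀ l : ℤ, (-1 : ℝ) ^ (l + 1) * (-1 : ℝ) ^ (l + u + 1) = (-1 : ℝ) ^ u := by
    intro l
    rw [← zpow_add₀ hne]
    have h2 : l + 1 + (l + u + 1) = u + 2 * (l + 1) := by ring
    rw [h2, zpow_add₀ hne]
    have : ((-1 : ℝ)) ^ (2 * (l + 1)) = 1 := by
      have : Even (2 * (l + 1)) := ⟨l + 1, by ring⟩
      exact this.neg_one_zpow
    rw [this, mul_one]
  -- g part equals sign * h part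
  have hG : (∑ᶠ l : ℤ, g l * g (l + u)) =
      (-1 : ℝ) ^ u * ∑ᶠ l : ℤ, h l * h (l + u) := by
    have hInv : Function.Involutive (fun m : ℤ => (L : ℤ) - 1 - u - m) := fun m => by simp
    set e : ℤ ≃ ℤ := hInv.toPerm _ with he_def
    have he : ∀ m : ℤ, e m = (L : ℤ) - 1 - u - m :=
      fun m => congrFun (Function.Involutive.coe_toPerm hInv) m
    have step1 : (∑ᶠ l : ℤ, g l * g (l + u)) =
        ∑ᶠ l : ℤ, (-1 : ℝ) ^ u * (h (((L : ℤ) - 1 - u - l) + u) * h ((L : ℤ) - 1 - u - l)) := by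
      apply finsum_congr
      intro l
      rw [hgdef l, hgdef (l + u)]
      have h3 : (L : ℤ) - 1 - (l + u) = (L : ℤ) - 1 - u - l := by ring
      have h4 : (L : ℤ) - 1 - l = ((L : ℤ) - 1 - u - l) + u := by ring
      rw [h3, h4]
      calc (-1 : ℝ) ^ (l + 1) * h (((L : ℤ) - 1 - u - l) + u) *
            ((-1 : ℝ) ^ (l + u + 1) * h ((L : ℤ) - 1 - u - l))
          = ((-1 : ℝ) ^ (l + 1) * (-1 : ℝ) ^ (l + u + 1)) *
            (h (((L : ℤ) - 1 - u - l) + u) * h ((L : ℤ) - 1 - u - l)) := by ring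
        _ = _ := by rw [key l]
    rw [step1, ← mul_finsum _ _]
    congr 1
    have : (∑ᶠ l : ℤ, h (((L : ℤ) - 1 - u - l) + u) * h ((L : ℤ) - 1 - u - l)) =
        ∑ᶠ l : ℤ, h (l + u) * h l := by
      simp only [← he]
      exact finsum_comp_equiv e (f := fun m => h (m + u) * h m)
    rw [this]
    exact finsum_congr fun l => mul_comm _ _
  rw [finsum_add_distrib hfing (hfinh u), hG]
  have hS : (∑ᶠ l : ℤ, g l * g (l + u)) + (∑ᶠ l : ℤ, h l * h (l + u)) =
      ((-1 : ℝ) ^ u + 1) * ∑ᶠ l : ℤ, h l * h (l + u) := by rw [hG]; ring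
  rcases Int.even_or_odd u with ⟨k, hk⟩ | ⟨k, hk⟩
  · have hu : u = 2 * k := by omega
    subst hu
    rw [horth_h k]
    have : ((-1 : ℝ)) ^ (2 * k) = 1 := Even.neg_one_zpow ⟨k, by ring⟩
    rw [this]
    by_cases hk0 : k = 0 <;> simp [hk0] <;> norm_num <;> omega
  · have : ((-1 : ℝ)) ^ u = -1 := Odd.neg_one_zpow ⟨k, by omega⟩
    rw [this]
    have hu0 : u ≠ 0 := by omega
    simp [hu0]
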